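/- Let V be a finite-dimensional real inner product space, p and q positive integers, and J : V → V a linear map with J² = p·J + q·id that is self-adjoint: ⟨J x, y⟩ = ⟨x, J y⟩ for all x, y ∈ V. Let W ⊆ V be a subspace with orthogonal projection P, set T x = P(J x), and let D ⊆ W be a subspace that is slant with angle θ, i.e. ‖T x‖² = cos²θ · ‖J x‖² for every x ∈ D. Then for all x, y ∈ D: ⟨T x, T y⟩ = cos²θ · ( p·⟨T x, y⟩ + q·⟨x, y⟩ ). -/

import Mathlib

open RealInnerProductSpace

/-- For a slant subspace `D ⊆ W` with slant angle `θ`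
(`‖T x‖² = cos²θ · ‖J x‖²` on `D`), one has
`⟪T x, T y⟫ = cos²θ · (p·⟪T x, y⟫ + q·⟪x, y⟫)` for all `x, y ∈ D`. -/
theorem slant_inner_T {V : Type*} [NormedAddCommGroup V] [InnerProductSpace ℝ V]
    [FiniteDimensional ℝ V]
    (p q : ℕ) (hp : 0 < p) (hq : 0 < q) (J : V →ₗ[ℝ] V)
    (hJ2 : ∀ x : V, J (J x) = (p : ℝ) • J x + (q : ℝ) • x)
    (hsym : ∀ x y : V, ⟪J x, y⟫ = ⟪x, J y⟫)
    (W : Submodule ℝ V)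
    (T : V → V) (hT : ∀ x : V, T x = (W.orthogonalProjection (J x) : V))
    (D : Submodule ℝ V) (hD : D ≤ W) (θ : ℝ)
    (hslant : ∀ x ∈ D, ‖T x‖ ^ 2 = Real.cos θ ^ 2 * ‖J x‖ ^ 2) :
    ∀ x ∈ D, ∀ y ∈ D,
      ⟪T x, T y⟫ = Real.cos θ ^ 2 * ((p : ℝ) * ⟪T x, y⟫ + (q : ℝ) * ⟪x, y⟫) := by
  set c := Real.cos θ ^ 2 with hc
  -- For y ∈ W, ⟪T x, y⟫ = ⟪J x, y⟫
  have key : ∀ x : V, ∀ y ∈ D, ⟪T x, y⟫ = ⟪J x, y⟫ := by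
    intro x y hy
    rw [hT, ← Submodule.starProjection_apply, Submodule.inner_starProjection_left_eq_right,
      Submodule.starProjection_eq_self_iff.mpr (hD hy)]
  -- symmetry of ⟪T x, y⟫ on D
  have symT : ∀ x ∈ D, ∀ y ∈ D, ⟪T x, y⟫ = ⟪T y, x⟫ := by
    intro x hx y hy
    rw [key x y hy, key y x hx, hsym, real_inner_comm]
  -- T is additive
  have Tadd : ∀ x y : V, T (x + y) = T x + T y := by
    intro x y
    simp [hT, map_add]
  -- diagonal identity
  have hdiag : ∀ x ∈ D, ⟪T x, T x⟫ = c * ((p : ℝ) * ⟪T x, x⟫ + (q : ℝ) * ⟪x, x⟫) := by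
    intro x hx
    have h1 : ⟪T x, T x⟫ = ‖T x‖ ^ 2 := by
      rw [real_inner_self_eq_norm_sq]
    have h2 : ‖J x‖ ^ 2 = (p : ℝ) * ⟪J x, x⟫ + (q : ℝ) * ⟪x, x⟫ := by
      have : ‖J x‖ ^ 2 = ⟪J x, J x⟫ := by rw [real_inner_self_eq_norm_sq]
      rw [this, hsym, hJ2, inner_add_right, real_inner_smul_right, real_inner_smul_right,
        real_inner_comm x (J x)]
    rw [h1, hslant x hx, h2, key x x hx]
  intro x hx y hy
  have hxy : x + y ∈ D := D.add_mem hx hy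
  have e1 := hdiag _ hxy
  have e2 := hdiag x hx
  have e3 := hdiag y hy
  rw [Tadd] at e1
  have sT := symT x hx y hy
  have sTT : ⟪T x, T y⟫ = ⟪T y, T x⟫ := real_inner_comm _ _
  have sxy : ⟪x, y⟫ = ⟪y, x⟫ := real_inner_comm _ _
  simp only [inner_add_left, inner_add_right] at e1
  linear_combination (e1 + sTT - c*(p:ℝ)*sT - c*(q:ℝ)*sxy - e2 - e3)/2
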